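/- Let κ be a regular uncountable cardinal and n a positive integer. Suppose f₀ : [κ⁺ⁿ]^{n+1} → [κ⁺ⁿ]^{<κ} satisfies: for every (n+2)-element subset U of κ⁺ⁿ there exists ξ ∈ U with ξ ∈ f₀(U \ {ξ}). Then there exists an algebraic closure operator f on [κ⁺ⁿ]^{<κ} (ordered by inclusion) such that for every (n+2)-element subset U of κ⁺ⁿ there exists ξ ∈ U with ξ ∈ f(U \ {ξ}), and f(X) = X for every X with |X| ≤ n. -/

import Mathlib

open Cardinal Set

namespace Stmt7Aux

variable {Ω : Type} (n : ℕ) (f₀ : Set Ω → Set Ω)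

/-- one-step closure -/
def gg (X : Set Ω) : Set Ω :=
  X ∪ ⋃ Y ∈ {Y : Set Ω | Y ⊆ X ∧ Y.Finite ∧ Y.ncard = n + 1}, f₀ Y

/-- full closure -/
def FF (X : Set Ω) : Set Ω := ⋃ k, (gg n f₀)^[k] X

lemma subset_gg (X : Set Ω) : X ⊆ gg n f₀ X := subset_union_left

lemma gg_mono {X X' : Set Ω} (h : X ⊆ X') : gg n f₀ X ⊆ gg n f₀ X' := by
  apply union_subset_union h
  apply biUnion_subset_biUnion_left
  intro Y hY
  exact ⟨hY.1.trans h, hY.2⟩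

lemma f₀_subset_gg {X Y : Set Ω} (hYX : Y ⊆ X) (hfin : Y.Finite) (hc : Y.ncard = n + 1) :
    f₀ Y ⊆ gg n f₀ X :=
  fun ξ hξ => Or.inr (mem_biUnion ⟨hYX, hfin, hc⟩ hξ)

lemma iter_mono_set {X X' : Set Ω} (h : X ⊆ X') (k : ℕ) :
    (gg n f₀)^[k] X ⊆ (gg n f₀)^[k] X' := by
  induction k with
  | zero => exact h
  | succ k ih =>
    rw [Function.iterate_succ_apply', Function.iterate_succ_apply']
    exact gg_mono n f₀ ih

lemma iter_mono_nat (X : Set Ω) : Monotone (fun k => (gg n f₀)^[k] X) := by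
  apply monotone_nat_of_le_succ
  intro k
  rw [Function.iterate_succ_apply']
  exact subset_gg n f₀ _

lemma subset_FF (X : Set Ω) : X ⊆ FF n f₀ X := subset_iUnion (fun k => (gg n f₀)^[k] X) 0

lemma FF_mono {X X' : Set Ω} (h : X ⊆ X') : FF n f₀ X ⊆ FF n f₀ X' :=
  iUnion_mono fun k => iter_mono_set n f₀ h k

lemma gg_finitary {X : Set Ω} {ξ : Ω} (h : ξ ∈ gg n f₀ X) :
    ∃ A ⊆ X, A.Finite ∧ ξ ∈ gg n f₀ A := by
  rcases h with h | h
  · exact ⟨{ξ}, singleton_subset_iff.2 h, finite_singleton ξ, subset_gg n f₀ _ rfl⟩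
  · rw [mem_iUnion₂] at h
    obtain ⟨Y, ⟨hYX, hfin, hc⟩, hξ⟩ := h
    exact ⟨Y, hYX, hfin, f₀_subset_gg n f₀ Subset.rfl hfin hc hξ⟩

/-- finite subsets of iterates come from finite subsets -/
lemma iter_finitary (k : ℕ) :
    ∀ (X B : Set Ω), B.Finite → B ⊆ (gg n f₀)^[k] X →
      ∃ A ⊆ X, A.Finite ∧ B ⊆ (gg n f₀)^[k] A := by
  induction k with
  | zero => exact fun X B hB h => ⟨B, h, hB, Subset.rfl⟩
  | succ k ih =>
    intro X B hB h
    rw [Function.iterate_succ_apply'] at h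
    have hC : ∀ b : B, ∃ C ⊆ (gg n f₀)^[k] X, C.Finite ∧ (b : Ω) ∈ gg n f₀ C := by
      rintro ⟨b, hb⟩
      exact gg_finitary n f₀ (h hb)
    choose C hC1 hC2 hC3 using hC
    have hBfin : Finite B := hB
    have hCU : (⋃ b : B, C b) ⊆ (gg n f₀)^[k] X := iUnion_subset hC1
    have hCUfin : (⋃ b : B, C b).Finite := finite_iUnion hC2
    obtain ⟨A, hAX, hAfin, hA⟩ := ih X (⋃ b : B, C b) hCUfin hCU
    refine ⟨A, hAX, hAfin, ?_⟩
    rw [Function.iterate_succ_apply']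
    intro b hb
    exact gg_mono n f₀ ((subset_iUnion _ ⟨b, hb⟩).trans hA) (hC3 ⟨b, hb⟩)

lemma FF_finitary {X : Set Ω} {ξ : Ω} (h : ξ ∈ FF n f₀ X) :
    ∃ A ⊆ X, A.Finite ∧ ξ ∈ FF n f₀ A := by
  rw [FF, mem_iUnion] at h
  obtain ⟨k, hk⟩ := h
  obtain ⟨A, hAX, hAfin, hA⟩ := iter_finitary n f₀ k X {ξ} (finite_singleton ξ)
    (singleton_subset_iff.2 hk)
  exact ⟨A, hAX, hAfin, mem_iUnion.2 ⟨k, hA rfl⟩⟩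

lemma finite_subset_directedOn {α β : Type*} {S : Set β} {t : β → Set α} (hne : S.Nonempty)
    (hdir : ∀ x ∈ S, ∀ y ∈ S, ∃ z ∈ S, t x ⊆ t z ∧ t y ⊆ t z)
    {B : Set α} (hB : B.Finite) (h : B ⊆ ⋃ x ∈ S, t x) : ∃ x ∈ S, B ⊆ t x := by
  revert h
  refine Set.Finite.induction_on _ hB ?_ ?_
  · intro _
    exact ⟨hne.choose, hne.choose_spec, empty_subset _⟩
  · intro a B' ha hB' ih h
    have hsub : B' ⊆ ⋃ x ∈ S, t x := (subset_insert a B').trans h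
    obtain ⟨x, hx, hBx⟩ := ih hsub
    have haU : a ∈ ⋃ x ∈ S, t x := h (mem_insert a B')
    rw [mem_iUnion₂] at haU
    obtain ⟨y, hy, hay⟩ := haU
    obtain ⟨z, hz, hxz, hyz⟩ := hdir x hx y hy
    exact ⟨z, hz, insert_subset (hyz hay) (hBx.trans hxz)⟩

/-- a finite subset of a monotone ℕ-union lies in one stage -/
lemma finite_subset_mono {α : Type*} {t : ℕ → Set α} (ht : Monotone t) {B : Set α}
    (hB : B.Finite) (h : B ⊆ ⋃ k, t k) : ∃ k, B ⊆ t k := by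
  have : ∀ b : B, ∃ k, (b : α) ∈ t k := fun b => mem_iUnion.1 (h b.2)
  choose g hg using this
  have hBfin : Finite B := hB
  rcases isEmpty_or_nonempty B with hE | hN
  · exact ⟨0, fun b hb => (hE.false (⟨b, hb⟩ : B)).elim⟩
  · obtain ⟨b₀, hb₀⟩ := Finite.exists_max g
    exact ⟨g b₀, fun b hb => ht (hb₀ ⟨b, hb⟩) (hg ⟨b, hb⟩)⟩

lemma gg_FF_subset (X : Set Ω) : gg n f₀ (FF n f₀ X) ⊆ FF n f₀ X := by
  intro ξ hξ
  obtain ⟨A, hAX, hAfin, hA⟩ := gg_finitary n f₀ hξ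
  obtain ⟨k, hk⟩ := finite_subset_mono (iter_mono_nat n f₀ X) hAfin hAX
  have : ξ ∈ gg n f₀ ((gg n f₀)^[k] X) := gg_mono n f₀ hk hA
  exact mem_iUnion.2 ⟨k + 1, by rw [Function.iterate_succ_apply']; exact this⟩

lemma FF_idem (X : Set Ω) : FF n f₀ (FF n f₀ X) = FF n f₀ X := by
  refine Subset.antisymm ?_ (subset_FF n f₀ _)
  apply iUnion_subset
  intro k
  induction k with
  | zero => exact Subset.rfl
  | succ k ih =>
    rw [Function.iterate_succ_apply']
    exact (gg_mono n f₀ ih).trans (gg_FF_subset n f₀ X)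

lemma FF_fixed {X : Set Ω} (hfin : X.Finite) (hle : X.ncard ≤ n) : FF n f₀ X = X := by
  have hg : gg n f₀ X = X := by
    refine Subset.antisymm ?_ (subset_gg n f₀ X)
    rintro ξ (h | h)
    · exact h
    · rw [mem_iUnion₂] at h
      obtain ⟨Y, ⟨hYX, hYfin, hc⟩, _⟩ := h
      have : Y.ncard ≤ X.ncard := Set.ncard_le_ncard hYX hfin
      omega
  have hiter : ∀ k, (gg n f₀)^[k] X = X := by
    intro k
    induction k with
    | zero => rfl
    | succ k ih => rw [Function.iterate_succ_apply', ih, hg]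
  refine Subset.antisymm ?_ (subset_FF n f₀ X)
  apply iUnion_subset
  intro k; rw [hiter k]


section Card

variable {κ : Cardinal}

lemma mk_index_lt (hunc : Cardinal.aleph0 < κ) {X : Set Ω} (hX : Cardinal.mk ↥X < κ) :
    Cardinal.mk ↥{Y : Set Ω | Y ⊆ X ∧ Y.Finite ∧ Y.ncard = n + 1} < κ := by
  have hinj : ∃ j : {Y : Set Ω // Y ⊆ X ∧ Y.Finite ∧ Y.ncard = n + 1} → Finset ↥X,
      Function.Injective j := by
    refine ⟨fun Y => (Y.2.2.1.preimage (Subtype.val_injective.injOn)).toFinset, ?_⟩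
    intro Y₁ Y₂ h
    rw [Set.Finite.toFinset_inj] at h
    have h2 : Subtype.val '' (Subtype.val ⁻¹' Y₁.1 : Set ↥X)
        = Subtype.val '' (Subtype.val ⁻¹' Y₂.1 : Set ↥X) := by rw [h]
    rw [Set.image_preimage_eq_inter_range, Set.image_preimage_eq_inter_range,
      Subtype.range_coe, Set.inter_eq_self_of_subset_left Y₁.2.1,
      Set.inter_eq_self_of_subset_left Y₂.2.1] at h2
    exact Subtype.ext h2
  obtain ⟨j, hj⟩ := hinj
  have h1 : Cardinal.mk ↥{Y : Set Ω | Y ⊆ X ∧ Y.Finite ∧ Y.ncard = n + 1}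
      ≤ Cardinal.mk (Finset ↥X) := Cardinal.mk_le_of_injective hj
  refine h1.trans_lt ?_
  rcases finite_or_infinite ↥X with hfin | hinf
  · haveI := hfin
    haveI : Fintype ↥X := Fintype.ofFinite ↥X
    exact lt_of_lt_of_le (Cardinal.lt_aleph0_of_finite _) hunc.le
  · rw [Cardinal.mk_finset_of_infinite]
    exact hX

lemma gg_card (hreg : κ.IsRegular) (hunc : Cardinal.aleph0 < κ)
    (hf₀small : ∀ Y : Set Ω, Y.Finite → Y.ncard = n + 1 → Cardinal.mk ↥(f₀ Y) < κ)
    {X : Set Ω} (hX : Cardinal.mk ↥X < κ) : Cardinal.mk ↥(gg n f₀ X) < κ := by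
  rw [gg]
  refine lt_of_le_of_lt (Cardinal.mk_union_le _ _) ?_
  apply Cardinal.add_lt_of_lt hreg.aleph0_le hX
  rw [Cardinal.card_biUnion_lt_iff_forall_of_isRegular hreg
    (mk_index_lt n hunc hX)]
  rintro Y ⟨_, hfin, hc⟩
  exact hf₀small Y hfin hc

lemma FF_card (hreg : κ.IsRegular) (hunc : Cardinal.aleph0 < κ)
    (hf₀small : ∀ Y : Set Ω, Y.Finite → Y.ncard = n + 1 → Cardinal.mk ↥(f₀ Y) < κ)
    {X : Set Ω} (hX : Cardinal.mk ↥X < κ) : Cardinal.mk ↥(FF n f₀ X) < κ := by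
  rw [FF, Cardinal.card_iUnion_lt_iff_forall_of_isRegular hreg (by rwa [Cardinal.mk_nat])]
  intro k
  induction k with
  | zero => exact hX
  | succ k ih =>
    rw [Function.iterate_succ_apply']
    exact gg_card n f₀ hreg hunc hf₀small ih

end Card

end Stmt7Aux



open Stmt7Aux in

/-- From a Kuratowski-type function f₀ on (n+1)-element subsets of a set Ω of cardinality κ⁺ⁿ
(κ regular uncountable), one obtains an algebraic closure operator f on [Ω]^{<κ} such that
every (n+2)-element subset U of Ω has an element ξ with ξ ∈ f(U \ {ξ}), and f(X) = X
whenever |X| ≤ n. -/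
theorem stmt_7 (κ : Cardinal) (hreg : κ.IsRegular) (hunc : Cardinal.aleph0 < κ)
    (n : ℕ) (hn : 0 < n) (Ω : Type) (hΩ : Cardinal.mk Ω = (Order.succ)^[n] κ)
    (f₀ : Set Ω → Set Ω)
    (hf₀small : ∀ Y : Set Ω, Y.Finite → Y.ncard = n + 1 → Cardinal.mk ↥(f₀ Y) < κ)
    (hf₀ : ∀ U : Set Ω, U.Finite → U.ncard = n + 2 → ∃ ξ ∈ U, ξ ∈ f₀ (U \ {ξ})) :
    ∃ f : {X : Set Ω // Cardinal.mk ↥X < κ} → {X : Set Ω // Cardinal.mk ↥X < κ},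
      (∀ X, f (f X) = f X) ∧ (∀ X, X ≤ f X) ∧ Monotone f ∧
      (∀ (S : Set {X : Set Ω // Cardinal.mk ↥X < κ}) (m), S.Nonempty →
        DirectedOn (· ≤ ·) S → IsLUB S m → IsLUB (f '' S) (f m)) ∧
      (∀ U : Set Ω, U.Finite → U.ncard = n + 2 →
        ∃ ξ ∈ U, ∀ (h : Cardinal.mk ↥(U \ {ξ}) < κ), ξ ∈ (f ⟨U \ {ξ}, h⟩).1) ∧
      (∀ (X : Set Ω), X.Finite → X.ncard ≤ n →
        ∀ (h : Cardinal.mk ↥X < κ), f ⟨X, h⟩ = ⟨X, h⟩) := by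
  refine ⟨fun X => ⟨FF n f₀ X.1, FF_card n f₀ hreg hunc hf₀small X.2⟩, ?_, ?_, ?_, ?_, ?_, ?_⟩
  · intro X
    exact Subtype.ext (FF_idem n f₀ X.1)
  · intro X
    exact subset_FF n f₀ X.1
  · intro a b hab
    exact FF_mono n f₀ hab
  · intro S m hne hdir hlub
    set U : Set Ω := ⋃ x ∈ S, (x : {X : Set Ω // Cardinal.mk ↥X < κ}).1 with hU
    have hUm : U ⊆ m.1 := iUnion₂_subset fun x hx => hlub.1 hx
    have hUcard : Cardinal.mk ↥U < κ := (Cardinal.mk_le_mk_of_subset hUm).trans_lt m.2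
    have hmU : m.1 = U := by
      refine Subset.antisymm ?_ hUm
      have : m ≤ ⟨U, hUcard⟩ := hlub.2 fun x hx => show x.1 ⊆ U from subset_iUnion₂ (s := fun x _ => x.1) x hx
      exact this
    constructor
    · rintro _ ⟨x, hx, rfl⟩
      exact FF_mono n f₀ (hlub.1 hx)
    · intro u hu
      show FF n f₀ m.1 ⊆ u.1
      intro ξ hξ
      rw [hmU] at hξ
      obtain ⟨A, hAU, hAfin, hA⟩ := FF_finitary n f₀ hξ
      obtain ⟨x, hx, hAx⟩ := finite_subset_directedOn hne
        (fun a ha b hb => by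
          obtain ⟨c, hc, hac, hbc⟩ := hdir a ha b hb
          exact ⟨c, hc, hac, hbc⟩) hAfin hAU
      have : ξ ∈ FF n f₀ x.1 := FF_mono n f₀ hAx hA
      exact hu ⟨x, hx, rfl⟩ this
  · intro U hfin hc
    obtain ⟨ξ, hξU, hξ⟩ := hf₀ U hfin hc
    refine ⟨ξ, hξU, fun h => ?_⟩
    have hcard : (U \ {ξ}).ncard = n + 1 := by
      rw [Set.ncard_diff_singleton_of_mem hξU, hc]; omega
    have h1 : ξ ∈ gg n f₀ (U \ {ξ}) :=
      f₀_subset_gg n f₀ Subset.rfl (hfin.diff) hcard hξ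
    exact mem_iUnion.2 ⟨1, by rwa [Function.iterate_one]⟩
  · intro X hfin hle h
    exact Subtype.ext (FF_fixed n f₀ hfin hle)
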